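/- arXiv:2505.10341 — 3 statements merged into one kernel-verified Lean document; each statement's English description precedes it below -/
import Mathlib

section
/- Let p be an odd prime, n ≥ 2 an integer, and a, b integers with gcd(ab, p) = 1. If ab is a quadratic nonresidue modulo p, then Kl(a, b; p^n) = 0. -/
/-- `e_q(t) = exp(2πi t / q)`. -/
noncomputable def eI (q : ℕ) (t : ℤ) : ℂ :=
  Complex.exp (2 * Real.pi * Complex.I * (t : ℂ) / (q : ℂ))

/-- The Kloosterman sum `Kl(a,b;q) = ∑_{x mod q, (x,q)=1} e_q(a x̄ + b x)`. -/
noncomputable def Kl (a b : ℤ) (q : ℕ) : ℂ :=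
  ∑ x ∈ Finset.range q, if Nat.gcd x q = 1 then
    eI q (a * (((x : ZMod q)⁻¹).val : ℤ) + b * (x : ℤ)) else 0

lemma eI_congr {q : ℕ} (hq : q ≠ 0) {t s : ℤ} (h : t ≡ s [ZMOD q]) : eI q t = eI q s := by
  obtain ⟨k, hk⟩ := h.dvd
  have hqc : (q : ℂ) ≠ 0 := Nat.cast_ne_zero.mpr hq
  have hs : (s : ℂ) = t + q * k := by
    have : s = t + (q : ℤ) * k := by linarith
    exact_mod_cast congrArg (Int.cast : ℤ → ℂ) this
  unfold eI
  rw [hs, show 2 * (Real.pi : ℂ) * Complex.I * ((t : ℂ) + q * k) / q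
      = 2 * (Real.pi : ℂ) * Complex.I * t / q + k * (2 * Real.pi * Complex.I) by
      field_simp]
  rw [Complex.exp_add, Complex.exp_int_mul_two_pi_mul_I, mul_one]

lemma eI_add (q : ℕ) (t s : ℤ) : eI q (t + s) = eI q t * eI q s := by
  unfold eI
  rw [← Complex.exp_add]
  congr 1
  push_cast
  ring

lemma eI_pow (p : ℕ) (hp : p ≠ 0) (n : ℕ) (hn : 1 ≤ n) (c : ℤ) :
    eI (p ^ n) ((p : ℤ) ^ (n - 1) * c) = eI p c := by
  unfold eI
  congr 1
  have hpc : (p : ℂ) ≠ 0 := Nat.cast_ne_zero.mpr hp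
  have h : (p : ℂ) ^ n = (p : ℂ) ^ (n - 1) * p := by
    rw [← pow_succ]; congr 1; omega
  push_cast
  rw [h]
  have hpc' : (p : ℂ) ^ (n - 1) ≠ 0 := pow_ne_zero _ hpc
  field_simp

lemma sum_eI_eq_zero (p : ℕ) (hp : p.Prime) (c : ℤ) (hc : ¬ (p : ℤ) ∣ c) :
    ∑ z ∈ Finset.range p, eI p (c * z) = 0 := by
  have hpc : (p : ℂ) ≠ 0 := Nat.cast_ne_zero.mpr hp.pos.ne'
  have h1 : ∀ z : ℕ, eI p (c * z) = (eI p c) ^ z := by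
    intro z
    unfold eI
    rw [← Complex.exp_nat_mul]
    congr 1
    push_cast
    ring
  simp_rw [h1]
  have h2pi : (2 * (Real.pi : ℂ) * Complex.I) ≠ 0 := by
    simp [Real.pi_ne_zero, Complex.I_ne_zero]
  have hne : eI p c ≠ 1 := by
    unfold eI
    intro h
    rw [Complex.exp_eq_one_iff] at h
    obtain ⟨m, hm⟩ := h
    have h2 : (c : ℂ) = m * p := by
      field_simp at hm
      apply mul_left_cancel₀ h2pi
      linear_combination (2 * (Real.pi : ℂ) * Complex.I) * hm
    have : c = m * p := by exact_mod_cast h2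
    exact hc ⟨m, by linarith⟩
  rw [geom_sum_eq hne]
  have hp1 : (eI p c) ^ p = 1 := by
    rw [← h1 p]
    unfold eI
    rw [show 2 * (Real.pi : ℂ) * Complex.I * ((c * (p:ℕ) : ℤ) : ℂ) / p
        = (c : ℂ) * (2 * Real.pi * Complex.I) by push_cast; field_simp]
    exact Complex.exp_int_mul_two_pi_mul_I c
  rw [hp1, sub_self, zero_div]

lemma sum_range_mul_eq {M : Type*} [AddCommMonoid M] {A B N : ℕ} (hA : 0 < A)
    (hN : A * B = N) (f : ℕ → M) :
    ∑ x ∈ Finset.range N, f x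
      = ∑ y ∈ Finset.range A, ∑ z ∈ Finset.range B, f (y + A * z) := by
  subst hN
  rw [Finset.sum_sigma']
  apply Finset.sum_nbij' (i := fun x => ⟨x % A, x / A⟩)
    (j := fun yz : Σ _ : ℕ, ℕ => yz.1 + A * yz.2)
  · intro x hx
    simp only [Finset.mem_range] at hx
    simp only [Finset.mem_sigma, Finset.mem_range]
    exact ⟨Nat.mod_lt _ hA, Nat.div_lt_of_lt_mul (by omega)⟩
  · intro yz hyz
    simp only [Finset.mem_sigma, Finset.mem_range] at hyz
    simp only [Finset.mem_range]
    have h1 : yz.1 + A * yz.2 < A * (yz.2 + 1) := by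
      rw [Nat.mul_succ]; omega
    have h2 : A * (yz.2 + 1) ≤ A * B := Nat.mul_le_mul_left _ (by omega)
    omega
  · intro x hx
    exact Nat.mod_add_div x A
  · intro yz hyz
    simp only [Finset.mem_sigma, Finset.mem_range] at hyz
    have h1 : (yz.1 + A * yz.2) % A = yz.1 := by
      rw [Nat.add_mul_mod_self_left, Nat.mod_eq_of_lt hyz.1]
    have h2 : (yz.1 + A * yz.2) / A = yz.2 := by
      rw [Nat.add_mul_div_left _ _ hA, Nat.div_eq_of_lt hyz.1, zero_add]
    simp [h1, h2]
  · intro x hx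
    rw [Nat.mod_add_div x A]

theorem stmt3 (p : ℕ) (hp : p.Prime) (hodd : p ≠ 2) (n : ℕ) (hn : 2 ≤ n)
    (a b : ℤ) (hab : Int.gcd (a * b) p = 1)
    (hns : ¬ IsSquare ((a * b : ℤ) : ZMod p)) :
    Kl a b (p ^ n) = 0 := by
  have hq0 : p ^ n ≠ 0 := pow_ne_zero n hp.pos.ne'
  haveI : NeZero (p ^ n) := ⟨hq0⟩
  have hA0 : 0 < p ^ (n - 1) := pow_pos hp.pos _
  have hApq : p ^ (n - 1) * p = p ^ n := by rw [← pow_succ]; congr 1; omega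
  have hpA : p ∣ p ^ (n - 1) := dvd_pow_self p (by omega)
  rw [Kl, sum_range_mul_eq hA0 hApq]
  apply Finset.sum_eq_zero
  intro y hy
  by_cases hpy : p ∣ y
  · apply Finset.sum_eq_zero
    intro z hz
    rw [if_neg]
    intro hgcd
    have h1 : p ∣ y + p ^ (n - 1) * z := hpy.add (hpA.mul_right z)
    have h2 : p ∣ p ^ n := dvd_pow_self p (by omega)
    have : p ∣ 1 := hgcd ▸ Nat.dvd_gcd h1 h2
    have hp2 := hp.two_le
    have := Nat.le_of_dvd one_pos this
    omega
  · -- main case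
    set q := p ^ n with hqdef
    set A := p ^ (n - 1) with hAdef
    have hyq : Nat.Coprime y q := ((Nat.Prime.coprime_iff_not_dvd hp).mpr hpy).symm.pow_right n
    set Y : ZMod q := (y : ZMod q)⁻¹ with hYdef
    set v : ℕ := Y.val with hvdef
    have hyY : (y : ZMod q) * Y = 1 := ZMod.coe_mul_inv_eq_one y hyq
    have hvY : ((v : ℕ) : ZMod q) = Y := ZMod.natCast_zmod_val Y
    have hA2 : ((A : ℕ) : ZMod q) * A = 0 := by
      rw [← Nat.cast_mul, ZMod.natCast_eq_zero_iff, hqdef, hAdef, ← pow_add]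
      exact pow_dvd_pow p (by omega)
    have hc : ¬ (p : ℤ) ∣ (b - a * (v : ℤ) ^ 2) := by
      intro hd
      apply hns
      have h0 : ((b - a * (v : ℤ) ^ 2 : ℤ) : ZMod p) = 0 :=
        (ZMod.intCast_zmod_eq_zero_iff_dvd _ p).mpr hd
      refine ⟨(a : ZMod p) * (v : ℕ), ?_⟩
      push_cast at h0 ⊢
      linear_combination (a : ZMod p) * h0
    have hterm : ∀ z ∈ Finset.range p,
        (if Nat.gcd (y + A * z) q = 1 then
          eI q (a * ((((y + A * z : ℕ) : ZMod q)⁻¹).val : ℤ) + b * ((y + A * z : ℕ) : ℤ))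
        else 0)
        = eI q (a * v + b * y) * eI p ((b - a * (v : ℤ) ^ 2) * z) := by
      intro z hz
      have hxcop : Nat.Coprime (y + A * z) q := by
        have : ¬ p ∣ (y + A * z) := by
          intro hd
          exact hpy ((Nat.dvd_add_right (hpA.mul_right z)).mp (by rwa [add_comm] at hd))
        exact ((Nat.Prime.coprime_iff_not_dvd hp).mpr this).symm.pow_right n
      rw [if_pos hxcop]
      have hx1 : ((y + A * z : ℕ) : ZMod q)⁻¹ = (((v : ℤ) - A * z * v ^ 2 : ℤ) : ZMod q) := by
        apply ZMod.inv_eq_of_mul_eq_one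
        push_cast
        rw [hvY]
        linear_combination (1 - (A : ZMod q) * z * Y) * hyY - (z : ZMod q) ^ 2 * Y ^ 2 * hA2
      have hx2 : (((((y + A * z : ℕ) : ZMod q))⁻¹).val : ℤ)
          ≡ (v : ℤ) - A * z * v ^ 2 [ZMOD q] := by
        rw [← ZMod.intCast_eq_intCast_iff, Int.cast_natCast, ZMod.natCast_zmod_val, hx1]
      have h3 : a * (((((y + A * z : ℕ) : ZMod q))⁻¹).val : ℤ) + b * ((y + A * z : ℕ) : ℤ)
          ≡ (a * v + b * y) + (p : ℤ) ^ (n - 1) * ((b - a * (v : ℤ) ^ 2) * z) [ZMOD q] := by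
        calc a * (((((y + A * z : ℕ) : ZMod q))⁻¹).val : ℤ) + b * ((y + A * z : ℕ) : ℤ)
            ≡ a * ((v : ℤ) - A * z * v ^ 2) + b * ((y + A * z : ℕ) : ℤ) [ZMOD q] :=
              (hx2.mul_left a).add_right _
          _ = (a * v + b * y) + (p : ℤ) ^ (n - 1) * ((b - a * (v : ℤ) ^ 2) * z) := by
              have hcast : ((y + A * z : ℕ) : ℤ) = (y : ℤ) + A * z := by push_cast; ring
              have hAcast : ((A : ℕ) : ℤ) = (p : ℤ) ^ (n - 1) := by
                rw [hAdef]; push_cast; ring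
              rw [hcast, hAcast]; ring
      rw [eI_congr hq0 h3, eI_add, eI_pow p hp.pos.ne' n (by omega)]
    rw [Finset.sum_congr rfl hterm, ← Finset.mul_sum,
      sum_eI_eq_zero p hp _ hc, mul_zero]
end

section
/- Let L ≥ 1 be an integer and c ∈ (0, 2^{−2^L}] a real number. Let K > 0 be real, let Q_0, Q_1, …, Q_L be positive integers, and let d be a positive integer with d | Q_0 and K/Q_j ≥ Q_0^{2c} for all 1 ≤ j ≤ L. For h = (h_1,…,h_L) ∈ ℤ^L and I ⊆ {1,…,L} write H_I := ∑_{i∈I} h_i. Then the number of tuples h ∈ ℤ^L with 1 ≤ |h_j| ≤ K/Q_j for all j, and such that for every prime p dividing d, with v := v_p(d) the p-adic valuation of d, one has min_{I,J ⊆ {1,…,L}, H_I ≠ H_J} |H_I − H_J|_p < p^{−cv} (where |·|_p is the p-adic absolute value), is at most C · 2^L · τ(d)^{2L−1} · d^{−c} · K^L/(Q_1⋯Q_L) for some absolute constant C > 0, where τ(d) is the number of positive divisors of d. -/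
open Finset





lemma count_residue {q : ℕ} (hq : 0 < q) {a b : ℤ} {A : Finset ℤ}
    (hA : A ⊆ Finset.Icc a b)
    (hcong : ∀ x ∈ A, ∀ y ∈ A, (q : ℤ) ∣ x - y) :
    A.card ≤ (b - a).toNat / q + 1 := by
  rcases A.eq_empty_or_nonempty with h | hne
  · simp [h]
  set x₀ := A.min' hne with hx₀def
  have hx₀ : x₀ ∈ A := A.min'_mem hne
  have hqz : (0 : ℤ) < q := by exact_mod_cast hq
  have hmaps : ∀ x ∈ A, ((x - x₀) / q).toNat ∈ Finset.range ((b - a).toNat / q + 1) := by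
    intro x hx
    have hdvd : (q : ℤ) ∣ x - x₀ := hcong x hx x₀ hx₀
    have hge : x₀ ≤ x := A.min'_le x hx
    have hnn : 0 ≤ (x - x₀) / q := Int.ediv_nonneg (by omega) (by omega)
    rw [Finset.mem_range, Nat.lt_succ_iff, Nat.le_div_iff_mul_le hq]
    have hle : x - x₀ ≤ b - a := by
      have h1 := (Finset.mem_Icc.1 (hA hx)).2
      have h2 := (Finset.mem_Icc.1 (hA hx₀)).1
      omega
    have : (((x - x₀) / q).toNat * q : ℤ) ≤ ((b - a).toNat : ℤ) := by
      push_cast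
      rw [Int.toNat_of_nonneg hnn, Int.ediv_mul_cancel hdvd]
      have : (0:ℤ) ≤ b - a := le_trans (by omega) hle
      rw [Int.toNat_of_nonneg this]; exact hle
    exact_mod_cast this
  have hinj : Set.InjOn (fun x => ((x - x₀) / q).toNat) A := by
    intro x hx y hy hxy
    have hdx : (q : ℤ) ∣ x - x₀ := hcong x hx x₀ hx₀
    have hdy : (q : ℤ) ∣ y - x₀ := hcong y hy x₀ hx₀
    have hgx : x₀ ≤ x := A.min'_le x hx
    have hgy : x₀ ≤ y := A.min'_le y hy
    have hnx : 0 ≤ (x - x₀) / q := Int.ediv_nonneg (by omega) (by omega)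
    have hny : 0 ≤ (y - x₀) / q := Int.ediv_nonneg (by omega) (by omega)
    have : (x - x₀) / q = (y - x₀) / q := by
      have := congrArg (fun n : ℕ => (n : ℤ)) hxy
      simpa [Int.toNat_of_nonneg hnx, Int.toNat_of_nonneg hny] using this
    have := congrArg (fun z : ℤ => z * q) this
    simp only [Int.ediv_mul_cancel hdx, Int.ediv_mul_cancel hdy] at this
    omega
  calc A.card ≤ (Finset.range ((b - a).toNat / q + 1)).card :=
        Finset.card_le_card_of_injOn _ hmaps hinj
    _ = (b - a).toNat / q + 1 := by simp

lemma geom_sum_le (n : ℕ) : ∑ i ∈ Finset.range (n + 1), 3 ^ i ≤ 4 ^ n := by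
  induction n with
  | zero => simp
  | succ n ih =>
      rw [Finset.sum_range_succ]
      have h3 : (3:ℕ) ^ (n+1) ≤ 3 * 4 ^ n := by
        have : (3:ℕ) ^ n ≤ 4 ^ n := Nat.pow_le_pow_left (by norm_num) n
        calc (3:ℕ) ^ (n+1) = 3 * 3 ^ n := by ring
          _ ≤ 3 * 4 ^ n := by omega
      calc ∑ i ∈ Finset.range (n+1), 3 ^ i + 3 ^ (n+1) ≤ 4 ^ n + 3 * 4 ^ n := by omega
        _ = 4 ^ (n+1) := by ring




def coeff3 : Fin 3 → ℤ := ![0, 1, -1]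

def FormT (L : ℕ) := (i : Fin L) × (Fin i.1 → Fin 3)

instance (L : ℕ) : Fintype (FormT L) := by unfold FormT; infer_instance
instance (L : ℕ) : DecidableEq (FormT L) := by unfold FormT; infer_instance

def lows {L : ℕ} (f : FormT L) (h : Fin L → ℤ) : ℤ :=
  ∑ j : Fin L, (if hj : j.1 < f.1.1 then coeff3 (f.2 ⟨j.1, hj⟩) else 0) * h j

def Lform {L : ℕ} (f : FormT L) (h : Fin L → ℤ) : ℤ := h f.1 + lows f h

lemma exists_form_of_disjoint {L : ℕ} (K₁ K₂ : Finset (Fin L)) (hdisj : Disjoint K₁ K₂)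
    (i₀ : Fin L) (hi₀ : i₀ ∈ K₁) (hmax : ∀ j ∈ K₁ ∪ K₂, j ≤ i₀) :
    ∃ f : FormT L, f.1 = i₀ ∧ ∀ h : Fin L → ℤ,
      Lform f h = (∑ i ∈ K₁, h i) - (∑ i ∈ K₂, h i) := by
  refine ⟨⟨i₀, fun j => if (⟨j.1, j.2.trans i₀.isLt⟩ : Fin L) ∈ K₁ then 1
      else if (⟨j.1, j.2.trans i₀.isLt⟩ : Fin L) ∈ K₂ then 2 else 0⟩, rfl, ?_⟩
  intro h
  have key : ∀ j : Fin L,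
      (if j = i₀ then h j else 0) +
        (if hj : j.1 < i₀.1 then coeff3 (if (⟨j.1, hj.trans i₀.isLt⟩ : Fin L) ∈ K₁ then 1
          else if (⟨j.1, hj.trans i₀.isLt⟩ : Fin L) ∈ K₂ then 2 else 0) else 0) * h j =
      (if j ∈ K₁ then h j else 0) - (if j ∈ K₂ then h j else 0) := by
    intro j
    rcases lt_trichotomy j.1 i₀.1 with hlt | heq | hgt
    · have hne : j ≠ i₀ := by intro e; rw [e] at hlt; omega
      have hjj : (⟨j.1, hlt.trans i₀.isLt⟩ : Fin L) = j := by ext; rfl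
      rw [if_neg hne, dif_pos hlt, hjj]
      by_cases h1 : j ∈ K₁
      · have h2 : j ∉ K₂ := Finset.disjoint_left.1 hdisj h1
        simp [h1, h2, coeff3]
      · by_cases h2 : j ∈ K₂
        · simp [h1, h2, coeff3]
        · simp [h1, h2, coeff3]
    · have he : j = i₀ := by ext; exact heq
      subst he
      have h2 : j ∉ K₂ := Finset.disjoint_left.1 hdisj hi₀
      simp [hi₀, h2, heq]
    · have h1 : j ∉ K₁ := fun hj => by
        have := hmax j (Finset.mem_union_left _ hj); omega
      have h2 : j ∉ K₂ := fun hj => by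
        have := hmax j (Finset.mem_union_right _ hj); omega
      have hne : j ≠ i₀ := by intro e; rw [e] at hgt; omega
      have hnlt : ¬ j.1 < i₀.1 := by omega
      simp [h1, h2, hne, hnlt]
  have := Finset.sum_congr rfl (fun j (_ : j ∈ (univ : Finset (Fin L))) => key j)
  rw [Finset.sum_add_distrib, Finset.sum_sub_distrib] at this
  simp only [Finset.sum_ite_eq' univ i₀ h, Finset.mem_univ, if_true] at this
  rw [Finset.sum_ite_mem, Finset.sum_ite_mem, Finset.univ_inter, Finset.univ_inter] at this
  exact this

lemma exists_form {L : ℕ} (h : Fin L → ℤ) (I J : Finset (Fin L))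
    (hne : (∑ i ∈ I, h i) ≠ (∑ i ∈ J, h i)) :
    ∃ f : FormT L, Lform f h = (∑ i ∈ I, h i) - (∑ i ∈ J, h i) ∨
      Lform f h = (∑ i ∈ J, h i) - (∑ i ∈ I, h i) := by
  set K₁ := I \ J with hK₁
  set K₂ := J \ I with hK₂
  have hdiff : (∑ i ∈ I, h i) - (∑ i ∈ J, h i) = (∑ i ∈ K₁, h i) - (∑ i ∈ K₂, h i) := by
    have e1 : ∑ i ∈ I, h i = (∑ i ∈ K₁, h i) + ∑ i ∈ I ∩ J, h i := by
      rw [hK₁, ← Finset.sum_sdiff (Finset.inter_subset_left (s₂ := J))]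
      rw [Finset.sdiff_inter_self_left]
    have e2 : ∑ i ∈ J, h i = (∑ i ∈ K₂, h i) + ∑ i ∈ I ∩ J, h i := by
      rw [hK₂, ← Finset.sum_sdiff (Finset.inter_subset_right (s₁ := I))]
      rw [Finset.sdiff_inter_self_right, Finset.inter_comm]
    rw [e1, e2]; ring
  have hdisj : Disjoint K₁ K₂ := Finset.sdiff_disjoint.mono_right Finset.sdiff_subset
  have hnon : (K₁ ∪ K₂).Nonempty := by
    by_contra hc
    rw [Finset.not_nonempty_iff_eq_empty, Finset.union_eq_empty] at hc
    apply hne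
    have : (∑ i ∈ I, h i) - (∑ i ∈ J, h i) = 0 := by
      rw [hdiff, hc.1, hc.2]; simp
    omega
  set i₀ := (K₁ ∪ K₂).max' hnon with hi₀def
  have hi₀mem : i₀ ∈ K₁ ∪ K₂ := (K₁ ∪ K₂).max'_mem hnon
  have hmax : ∀ j ∈ K₁ ∪ K₂, j ≤ i₀ := fun j hj => (K₁ ∪ K₂).le_max' j hj
  rcases Finset.mem_union.1 hi₀mem with hm | hm
  · obtain ⟨f, -, hf⟩ := exists_form_of_disjoint K₁ K₂ hdisj i₀ hm hmax
    exact ⟨f, Or.inl (by rw [hf h, hdiff])⟩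
  · obtain ⟨f, -, hf⟩ := exists_form_of_disjoint K₂ K₁ hdisj.symm i₀ hm
      (fun j hj => hmax j (by rwa [Finset.union_comm]))
    refine ⟨f, Or.inr ?_⟩
    rw [hf h]
    have : (∑ i ∈ J, h i) - (∑ i ∈ I, h i) = (∑ i ∈ K₂, h i) - (∑ i ∈ K₁, h i) := by omega
    rw [this]

lemma lows_congr {L : ℕ} (f : FormT L) (h g : Fin L → ℤ)
    (hpre : ∀ j : Fin L, j < f.1 → h j = g j) : lows f h = lows f g := by
  apply Finset.sum_congr rfl
  intro j _
  by_cases hj : j.1 < f.1.1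
  · rw [hpre j hj]
  · simp [hj]


lemma formT_card (L : ℕ) : Fintype.card (FormT L) = ∑ i ∈ Finset.range L, 3 ^ i := by
  unfold FormT
  rw [Fintype.card_sigma]
  rw [← Fin.sum_univ_eq_sum_range (fun i => 3 ^ i) L]
  apply Finset.sum_congr rfl
  intro i _
  simp [Fintype.card_fun]




lemma triangular_count {L : ℕ} (T : Finset (Fin L → ℤ))
    (A : (Fin L → ℤ) → Fin L → Finset ℤ) (a : Fin L → ℕ)
    (hmem : ∀ h ∈ T, ∀ i, h i ∈ A h i)
    (hdep : ∀ h g : Fin L → ℤ, ∀ i : Fin L, (∀ j : Fin L, j < i → h j = g j) → A h i = A g i)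
    (hcard : ∀ h i, (A h i).card ≤ a i) :
    T.card ≤ ∏ i, a i := by
  classical
  set Φ : (Fin L → ℤ) → (Fin L → ℕ) :=
    fun h i => ((A h i).sort (· ≤ ·)).idxOf (h i) with hΦ
  have hinj : Set.InjOn Φ T := by
    intro h hh g hg hfg
    have key : ∀ n : ℕ, ∀ hn : n < L, h ⟨n, hn⟩ = g ⟨n, hn⟩ := by
      intro n
      induction n using Nat.strong_induction_on with
      | _ n ih =>
        intro hn
        set i : Fin L := ⟨n, hn⟩
        have hAeq : A h i = A g i := by
          apply hdep
          intro j hj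
          have := ih j.1 hj j.2
          convert this <;> simp
        have hmh : h i ∈ (A h i).sort (· ≤ ·) := (Finset.mem_sort _).2 (hmem h hh i)
        have hmg : g i ∈ (A h i).sort (· ≤ ·) := by
          rw [hAeq]; exact (Finset.mem_sort _).2 (hmem g hg i)
        have hidx : ((A h i).sort (· ≤ ·)).idxOf (h i)
            = ((A h i).sort (· ≤ ·)).idxOf (g i) := by
          have := congrFun hfg i
          simp only [hΦ] at this
          rw [this, hAeq]
        exact (List.idxOf_inj hmh).1 hidx
    funext i
    exact key i.1 i.2
  have hmaps : ∀ h ∈ T, Φ h ∈ Fintype.piFinset (fun i => Finset.range (a i)) := by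
    intro h hh
    rw [Fintype.mem_piFinset]
    intro i
    rw [Finset.mem_range]
    calc ((A h i).sort (· ≤ ·)).idxOf (h i)
        < ((A h i).sort (· ≤ ·)).length :=
          List.idxOf_lt_length_iff.2 ((Finset.mem_sort _).2 (hmem h hh i))
      _ = (A h i).card := Finset.length_sort _
      _ ≤ a i := hcard h i
  calc T.card ≤ (Fintype.piFinset (fun i => Finset.range (a i))).card :=
        Finset.card_le_card_of_injOn Φ hmaps hinj
    _ = ∏ i, a i := by simp




lemma dvd_of_padicNorm_lt {p : ℕ} (hp : p.Prime) {D : ℤ} (hD : D ≠ 0) {x : ℝ}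
    (hlt : ((padicNorm p ((D : ℤ) : ℚ) : ℚ) : ℝ) < (p : ℝ) ^ (-x)) :
    (p : ℤ) ^ (⌈x⌉₊) ∣ D := by
  haveI : Fact p.Prime := ⟨hp⟩
  have hDQ : ((D : ℚ)) ≠ 0 := Int.cast_ne_zero.2 hD
  set t : ℕ := padicValInt p D with ht
  have hnorm : padicNorm p ((D : ℤ) : ℚ) = (p : ℚ) ^ (-(t : ℤ)) := by
    rw [padicNorm.eq_zpow_of_nonzero hDQ, padicValRat.of_int]
  have hp1 : (1 : ℝ) < (p : ℝ) := by exact_mod_cast hp.one_lt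
  have hcast : ((padicNorm p ((D : ℤ) : ℚ) : ℚ) : ℝ) = (p : ℝ) ^ (-(t : ℝ)) := by
    rw [hnorm]
    push_cast
    rw [← Real.rpow_intCast (p : ℝ) (-(t : ℤ))]
    norm_num
  rw [hcast, Real.rpow_lt_rpow_left_iff hp1, neg_lt_neg_iff] at hlt
  have hle : ⌈x⌉₊ ≤ t := Nat.ceil_le.2 hlt.le
  exact dvd_trans (pow_dvd_pow _ hle) (padicValInt_dvd D)

lemma per_sigma_bound {L : ℕ} {c : ℝ} (hc : 0 < c) {D : ℝ} (hD : 1 ≤ D)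
    (M : Fin L → ℝ) (hM : ∀ i, D ^ (2 * c) ≤ M i)
    (P : Finset ℕ) (hPP : ∀ p ∈ P, p.Prime) (e : ℕ → ℕ)
    (hprod : D ^ c ≤ ((∏ p ∈ P, p ^ e p : ℕ) : ℝ))
    (σ : ∀ p ∈ P, FormT L) (T : Finset (Fin L → ℤ))
    (hT1 : ∀ h ∈ T, ∀ i, h i ≠ 0 ∧ |h i| ≤ (⌊M i⌋₊ : ℤ))
    (hT2 : ∀ h ∈ T, ∀ p, ∀ hp : p ∈ P, ((p : ℤ) ^ e p) ∣ Lform (σ p hp) h) :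
    (T.card : ℝ) ≤ 2 ^ P.card * D ^ (-c) * ∏ i, (2 * M i) := by
  classical
  set m : Fin L → ℕ := fun i => ⌊M i⌋₊ with hm
  have hDpos : (0 : ℝ) < D := lt_of_lt_of_le one_pos hD
  have hdc1 : (1 : ℝ) ≤ D ^ (2 * c) := Real.one_le_rpow hD (by positivity)
  have hM1 : ∀ i, 1 ≤ M i := fun i => le_trans hdc1 (hM i)
  have hMpos : ∀ i, 0 < M i := fun i => lt_of_lt_of_le one_pos (hM1 i)
  set fib : Fin L → Finset {x // x ∈ P} :=
    fun i => P.attach.filter (fun pp => (σ pp.1 pp.2).1 = i) with hfib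
  set q : Fin L → ℕ := fun i => ∏ pp ∈ fib i, pp.1 ^ e pp.1 with hq
  have hqpos : ∀ i, 0 < q i := by
    intro i
    apply Finset.prod_pos
    intro pp _
    exact pow_pos (Nat.Prime.pos (hPP pp.1 pp.2)) _
  set A : (Fin L → ℤ) → Fin L → Finset ℤ := fun h i =>
    (Finset.Icc (-(m i : ℤ)) (m i)).filter
      (fun x => x ≠ 0 ∧ ∀ pp ∈ fib i, ((pp.1 : ℤ) ^ e pp.1) ∣ (x + lows (σ pp.1 pp.2) h))
    with hA
  set a : Fin L → ℕ := fun i =>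
    if (fib i).Nonempty then 2 * m i / q i + 1 else 2 * m i with ha
  -- step 1: card T ≤ ∏ a
  have hcount : T.card ≤ ∏ i, a i := by
    apply triangular_count T A a
    · intro h hh i
      rw [hA]
      simp only [Finset.mem_filter, Finset.mem_Icc]
      obtain ⟨hne, habs⟩ := hT1 h hh i
      refine ⟨by rw [abs_le] at habs; exact habs, hne, ?_⟩
      intro pp hpp
      have htop : (σ pp.1 pp.2).1 = i := (Finset.mem_filter.1 hpp).2
      have := hT2 h hh pp.1 pp.2
      rw [Lform] at this
      rwa [← htop]
    · intro h g i hpre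
      rw [hA]
      apply Finset.filter_congr
      intro x _
      have hl : ∀ pp ∈ fib i, lows (σ pp.1 pp.2) h = lows (σ pp.1 pp.2) g := by
        intro pp hpp
        have htop : (σ pp.1 pp.2).1 = i := (Finset.mem_filter.1 hpp).2
        apply lows_congr
        intro j hj
        rw [htop] at hj
        exact hpre j hj
      constructor
      · rintro ⟨h1, h2⟩
        exact ⟨h1, fun pp hpp => by rw [← hl pp hpp]; exact h2 pp hpp⟩
      · rintro ⟨h1, h2⟩
        exact ⟨h1, fun pp hpp => by rw [hl pp hpp]; exact h2 pp hpp⟩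
    · intro h i
      by_cases hne : (fib i).Nonempty
      · have hsub : A h i ⊆ Finset.Icc (-(m i : ℤ)) (m i) := Finset.filter_subset _ _
        have hcong : ∀ x ∈ A h i, ∀ y ∈ A h i, ((q i : ℕ) : ℤ) ∣ x - y := by
          intro x hx y hy
          have hx' := (Finset.mem_filter.1 hx).2.2
          have hy' := (Finset.mem_filter.1 hy).2.2
          have hcast : ((q i : ℕ) : ℤ) = ∏ pp ∈ fib i, ((pp.1 : ℤ) ^ e pp.1) := by
            rw [hq]; push_cast; rfl
          rw [hcast]
          apply Finset.prod_dvd_of_coprime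
          · intro pp hpp qq hqq hne'
            simp only [Function.onFun]
            have hp1 : pp.1.Prime := hPP pp.1 pp.2
            have hp2 : qq.1.Prime := hPP qq.1 qq.2
            have hvne : pp.1 ≠ qq.1 := fun hv => hne' (Subtype.ext hv)
            have hcop : IsCoprime (pp.1 : ℤ) (qq.1 : ℤ) := by
              rw [Int.isCoprime_iff_gcd_eq_one]
              exact_mod_cast (Nat.coprime_primes hp1 hp2).2 hvne
            exact hcop.pow
          · intro pp hpp
            have d1 := hx' pp hpp
            have d2 := hy' pp hpp
            have heq : x - y = (x + lows (σ pp.1 pp.2) h) - (y + lows (σ pp.1 pp.2) h) := by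
              ring
            rw [heq]
            exact dvd_sub d1 d2
        have := count_residue (hqpos i) hsub hcong
        rw [ha]
        simp only [hne, if_true]
        have heq : ((m i : ℤ) - (-(m i : ℤ))).toNat = 2 * m i := by omega
        rwa [heq] at this
      · rw [ha]
        simp only [hne, if_false]
        have hsub : A h i ⊆ (Finset.Icc (-(m i : ℤ)) (m i)).erase 0 := by
          intro x hx
          rw [Finset.mem_erase]
          exact ⟨(Finset.mem_filter.1 hx).2.1, (Finset.mem_filter.1 hx).1⟩
        calc (A h i).card ≤ ((Finset.Icc (-(m i : ℤ)) (m i)).erase 0).card :=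
              Finset.card_le_card hsub
          _ ≤ (Finset.Icc (-(m i : ℤ)) (m i)).card - 1 := by
              rw [Finset.card_erase_of_mem]
              rw [Finset.mem_Icc]
              omega
          _ ≤ 2 * m i := by
              rw [Int.card_Icc]
              omega
  -- step 2: real bound on ∏ a
  set E : Finset (Fin L) := Finset.univ.filter (fun i => (fib i).Nonempty) with hE
  have hqone : ∀ i ∉ E, q i = 1 := by
    intro i hi
    rw [hE, Finset.mem_filter] at hi
    push_neg at hi
    have hfe : fib i = ∅ := hi (Finset.mem_univ i)
    simp only [hq]
    rw [hfe, Finset.prod_empty]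
  have hqprodE : ∏ i ∈ E, q i = ∏ p ∈ P, p ^ e p := by
    have h1 : ∏ i ∈ E, q i = ∏ i, q i := by
      apply Finset.prod_subset (Finset.subset_univ E)
      intro x _ hx
      exact hqone x hx
    rw [h1]
    simp only [hq]
    have h2 : ∏ i : Fin L, ∏ pp ∈ fib i, pp.1 ^ e pp.1
        = ∏ pp ∈ P.attach, pp.1 ^ e pp.1 := by
      simp only [hfib]
      exact Finset.prod_fiberwise_of_maps_to (fun pp _ => Finset.mem_univ _) _
    rw [h2, ← Finset.prod_attach P (fun p => p ^ e p)]
  have hEcard : E.card ≤ P.card := by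
    have hEsub : E ⊆ P.attach.image (fun pp => (σ pp.1 pp.2).1) := by
      intro i hi
      rw [hE, Finset.mem_filter] at hi
      obtain ⟨pp, hpp⟩ := hi.2
      rw [Finset.mem_image]
      exact ⟨pp, Finset.mem_attach _ _, (Finset.mem_filter.1 hpp).2⟩
    calc E.card ≤ (P.attach.image (fun pp => (σ pp.1 pp.2).1)).card :=
          Finset.card_le_card hEsub
      _ ≤ P.attach.card := Finset.card_image_le
      _ = P.card := Finset.card_attach
  have hDc1 : (1:ℝ) ≤ D ^ c := Real.one_le_rpow hD hc.le
  have hDcpos : (0:ℝ) < D ^ c := lt_of_lt_of_le one_pos hDc1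
  have hDnc : (0:ℝ) < D ^ (-c) := Real.rpow_pos_of_pos hDpos _
  have hmle : ∀ i, ((m i : ℕ) : ℝ) ≤ M i := fun i => Nat.floor_le (hMpos i).le
  have h2M : ∀ i, (0:ℝ) < 2 * M i := fun i => by linarith [hMpos i]
  have hqR : ∀ i, (0:ℝ) < (q i : ℝ) := fun i => by exact_mod_cast hqpos i
  -- bounds on a i
  have haE : ∀ i ∈ E, (a i : ℝ) ≤ 2 * M i / q i + 1 := by
    intro i hi
    rw [hE, Finset.mem_filter] at hi
    simp only [ha, hi.2, if_true]
    push_cast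
    have h1 : ((2 * m i / q i : ℕ) : ℝ) ≤ ((2 * m i : ℕ) : ℝ) / ((q i : ℕ) : ℝ) :=
      Nat.cast_div_le
    have h4 : ((2 * m i : ℕ) : ℝ) = 2 * ((m i : ℕ) : ℝ) := by push_cast; ring
    rw [h4] at h1
    have h3 : 2 * ((m i : ℕ) : ℝ) / ((q i : ℕ) : ℝ) ≤ 2 * M i / ((q i : ℕ) : ℝ) := by
      rw [div_eq_mul_inv, div_eq_mul_inv]
      exact mul_le_mul_of_nonneg_right (by linarith [hmle i]) (inv_nonneg.2 (hqR i).le)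
    push_cast at h1 h3
    linarith
  have haNE : ∀ i ∉ E, (a i : ℝ) ≤ 2 * M i := by
    intro i hi
    rw [hE, Finset.mem_filter] at hi
    push_neg at hi
    have hfe := hi (Finset.mem_univ i)
    simp only [ha, hfe, Finset.not_nonempty_empty, if_false]
    push_cast
    linarith [hmle i]
  -- core: product over E
  have hcore : ∏ i ∈ E, (2 * M i / q i + 1) ≤ 2 ^ E.card * D ^ (-c) * ∏ i ∈ E, (2 * M i) := by
    have hqprodR : D ^ c ≤ ∏ i ∈ E, (q i : ℝ) := by
      rw [← Nat.cast_prod, hqprodE]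
      exact hprod
    have hfact_nn : ∀ i ∈ E, (0:ℝ) ≤ 2 * M i / q i + 1 := by
      intro i _
      have := div_nonneg (h2M i).le (hqR i).le
      linarith
    by_cases hcase : ∀ i ∈ E, (q i : ℝ) ≤ 2 * M i
    · calc ∏ i ∈ E, (2 * M i / q i + 1) ≤ ∏ i ∈ E, (2 * (2 * M i) / q i) := by
            apply Finset.prod_le_prod hfact_nn
            intro i hi
            have hq2 : (0:ℝ) < (q i : ℝ) := hqR i
            rw [div_add' _ _ _ hq2.ne', div_le_div_iff₀ hq2 hq2]
            have := hcase i hi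
            nlinarith
        _ = (∏ i ∈ E, 2 * (2 * M i)) / ∏ i ∈ E, (q i : ℝ) := by
            rw [Finset.prod_div_distrib]
        _ ≤ (∏ i ∈ E, 2 * (2 * M i)) * D ^ (-c) := by
            rw [Real.rpow_neg hDpos.le, div_eq_mul_inv]
            apply mul_le_mul_of_nonneg_left
            · exact inv_anti₀ hDcpos hqprodR
            · exact Finset.prod_nonneg (fun i _ => by linarith [h2M i])
        _ = 2 ^ E.card * D ^ (-c) * ∏ i ∈ E, (2 * M i) := by
            rw [Finset.prod_mul_distrib, Finset.prod_const]
            ring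
    · push_neg at hcase
      obtain ⟨i₀, hi₀E, hlt⟩ := hcase
      have key1 : 2 * M i₀ / q i₀ + 1 ≤ 2 * (2 * M i₀) * D ^ (-c) := by
        have h1 : 2 * M i₀ / q i₀ < 1 := by
          rw [div_lt_one (hqR i₀)]
          exact hlt
        have h2 : D ^ (2*c) * D ^ (-c) = D ^ c := by
          rw [← Real.rpow_add hDpos]
          ring_nf
        have h4 : D ^ (2*c) * D ^ (-c) ≤ M i₀ * D ^ (-c) :=
          mul_le_mul_of_nonneg_right (hM i₀) hDnc.le
        rw [h2] at h4
        nlinarith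
      have key2 : ∀ i ∈ E.erase i₀, 2 * M i / q i + 1 ≤ 2 * (2 * M i) := by
        intro i _
        have hq1 : (1:ℝ) ≤ q i := by exact_mod_cast hqpos i
        have h5 : 2 * M i / q i ≤ 2 * M i := div_le_self (h2M i).le hq1
        linarith [hM1 i]
      calc ∏ i ∈ E, (2 * M i / q i + 1)
          = (2 * M i₀ / q i₀ + 1) * ∏ i ∈ E.erase i₀, (2 * M i / q i + 1) :=
            (Finset.mul_prod_erase E _ hi₀E).symm
        _ ≤ (2 * (2 * M i₀) * D ^ (-c)) * ∏ i ∈ E.erase i₀, (2 * (2 * M i)) := by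
            apply mul_le_mul key1
            · apply Finset.prod_le_prod
              · intro i hi; exact hfact_nn i (Finset.mem_of_mem_erase hi)
              · exact key2
            · exact Finset.prod_nonneg (fun i hi => hfact_nn i (Finset.mem_of_mem_erase hi))
            · have := h2M i₀
              positivity
        _ = D ^ (-c) * ((2 * (2 * M i₀)) * ∏ i ∈ E.erase i₀, (2 * (2 * M i))) := by ring
        _ = D ^ (-c) * ∏ i ∈ E, (2 * (2 * M i)) := by
            rw [Finset.mul_prod_erase E (fun i => 2 * (2 * M i)) hi₀E]
        _ = 2 ^ E.card * D ^ (-c) * ∏ i ∈ E, (2 * M i) := by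
            rw [Finset.prod_mul_distrib, Finset.prod_const]
            ring
  -- combine
  have hfinal : (∏ i, (a i : ℝ)) ≤ 2 ^ P.card * D ^ (-c) * ∏ i, (2 * M i) := by
    have hsplit : (∏ i, (a i : ℝ))
        = (∏ i ∈ E, (a i : ℝ)) * ∏ i ∈ Finset.univ.filter (fun i => ¬ (fib i).Nonempty), (a i : ℝ) := by
      rw [hE]
      exact (Finset.prod_filter_mul_prod_filter_not Finset.univ _ _).symm
    have hb1 : (∏ i ∈ E, (a i : ℝ)) ≤ 2 ^ E.card * D ^ (-c) * ∏ i ∈ E, (2 * M i) := by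
      calc (∏ i ∈ E, (a i : ℝ)) ≤ ∏ i ∈ E, (2 * M i / q i + 1) := by
            apply Finset.prod_le_prod (fun i _ => Nat.cast_nonneg _) haE
        _ ≤ _ := hcore
    have hb2 : (∏ i ∈ Finset.univ.filter (fun i => ¬ (fib i).Nonempty), (a i : ℝ))
        ≤ ∏ i ∈ Finset.univ.filter (fun i => ¬ (fib i).Nonempty), (2 * M i) := by
      apply Finset.prod_le_prod (fun i _ => Nat.cast_nonneg _)
      intro i hi
      apply haNE
      rw [hE]
      rw [Finset.mem_filter] at hi ⊢
      exact fun hc' => hi.2 hc'.2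
    calc (∏ i, (a i : ℝ))
        = (∏ i ∈ E, (a i : ℝ)) * ∏ i ∈ Finset.univ.filter (fun i => ¬ (fib i).Nonempty), (a i : ℝ) := hsplit
      _ ≤ (2 ^ E.card * D ^ (-c) * ∏ i ∈ E, (2 * M i))
          * ∏ i ∈ Finset.univ.filter (fun i => ¬ (fib i).Nonempty), (2 * M i) := by
          apply mul_le_mul hb1 hb2
          · exact Finset.prod_nonneg (fun i _ => Nat.cast_nonneg _)
          · have : (0:ℝ) ≤ ∏ i ∈ E, (2 * M i) :=
              Finset.prod_nonneg (fun i _ => (h2M i).le)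
            positivity
      _ = 2 ^ E.card * D ^ (-c) * ((∏ i ∈ E, (2 * M i))
          * ∏ i ∈ Finset.univ.filter (fun i => ¬ (fib i).Nonempty), (2 * M i)) := by ring
      _ = 2 ^ E.card * D ^ (-c) * ∏ i, (2 * M i) := by
          rw [hE, Finset.prod_filter_mul_prod_filter_not Finset.univ _ _]
      _ ≤ 2 ^ P.card * D ^ (-c) * ∏ i, (2 * M i) := by
          have hprodnn : (0:ℝ) ≤ ∏ i, (2 * M i) :=
            Finset.prod_nonneg (fun i _ => (h2M i).le)
          apply mul_le_mul_of_nonneg_right _ hprodnn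
          apply mul_le_mul_of_nonneg_right _ hDnc.le
          exact pow_le_pow_right₀ one_le_two hEcard
  calc (T.card : ℝ) ≤ ((∏ i, a i : ℕ) : ℝ) := by exact_mod_cast hcount
    _ = ∏ i, (a i : ℝ) := by push_cast; rfl
    _ ≤ _ := hfinal




lemma dc_le_prod {d : ℕ} (hd : 0 < d) {c : ℝ} (hc : 0 < c) (e : ℕ → ℕ)
    (he : ∀ p ∈ d.primeFactors, c * (d.factorization p : ℝ) ≤ (e p : ℝ)) :
    (d : ℝ) ^ c ≤ ((∏ p ∈ d.primeFactors, p ^ e p : ℕ) : ℝ) := by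
  have hdeq : (d : ℝ) = ∏ p ∈ d.primeFactors, ((p : ℝ) ^ (d.factorization p : ℕ)) := by
    have := Nat.factorization_prod_pow_eq_self hd.ne'
    rw [Finsupp.prod] at this
    rw [Nat.support_factorization] at this
    exact_mod_cast congrArg (fun n : ℕ => (n : ℝ)) this.symm
  have hstep : (d : ℝ) ^ c = ∏ p ∈ d.primeFactors, ((p : ℝ) ^ (d.factorization p : ℕ)) ^ c := by
    rw [hdeq, ← Real.finset_prod_rpow _ _ (fun p _ => by positivity) c]
  rw [hstep]
  push_cast
  apply Finset.prod_le_prod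
  · intro p _
    positivity
  · intro p hp
    have hp2 : (1:ℝ) ≤ (p:ℝ) := by
      exact_mod_cast (Nat.prime_of_mem_primeFactors hp).one_le
    rw [← Real.rpow_natCast (p:ℝ) (d.factorization p), ← Real.rpow_natCast (p:ℝ) (e p),
      ← Real.rpow_mul (by linarith) _]
    apply Real.rpow_le_rpow_of_exponent_le hp2
    have := he p hp
    linarith
lemma two_pow_le_card_divisors {d : ℕ} (hd : 0 < d) :
    2 ^ d.primeFactors.card ≤ d.divisors.card := by
  rw [Nat.card_divisors hd.ne']
  calc (2:ℕ) ^ d.primeFactors.card = ∏ _p ∈ d.primeFactors, 2 := by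
        rw [Finset.prod_const]
    _ ≤ d.primeFactors.prod (d.factorization · + 1) := by
        apply Finset.prod_le_prod'
        intro p hp
        have : 1 ≤ d.factorization p := by
          rw [← Nat.Prime.pow_dvd_iff_le_factorization (Nat.prime_of_mem_primeFactors hp) hd.ne',
            pow_one]
          exact Nat.dvd_of_mem_primeFactors hp
        omega

lemma two_mul_formT_card_le {L : ℕ} (hL : 1 ≤ L) :
    2 * Fintype.card (FormT L) ≤ 2 ^ (2 * L - 1) := by
  obtain ⟨n, rfl⟩ : ∃ n, L = n + 1 := ⟨L - 1, by omega⟩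
  rw [formT_card]
  have h1 := geom_sum_le n
  have h2 : 2 * (n + 1) - 1 = 2 * n + 1 := by omega
  rw [h2]
  have h3 : (4:ℕ) ^ n = 2 ^ (2 * n) := by
    rw [pow_mul]; norm_num
  calc 2 * ∑ i ∈ Finset.range (n + 1), 3 ^ i ≤ 2 * 4 ^ n := by omega
    _ = 2 ^ (2 * n + 1) := by rw [h3]; ring


theorem stmt8 :
    ∃ C : ℝ, 0 < C ∧
      ∀ L : ℕ, 1 ≤ L → ∀ c : ℝ, 0 < c → c ≤ ((2 : ℝ) ^ (2 ^ L))⁻¹ →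
      ∀ K : ℝ, 0 < K → ∀ Q₀ : ℕ, 0 < Q₀ → ∀ Q : Fin L → ℕ, (∀ j, 0 < Q j) →
      ∀ d : ℕ, 0 < d → d ∣ Q₀ → (∀ j, (Q₀ : ℝ) ^ (2 * c) ≤ K / (Q j : ℝ)) →
        ({h : Fin L → ℤ |
            (∀ j, 1 ≤ |h j| ∧ (|h j| : ℝ) ≤ K / (Q j : ℝ)) ∧
            ∀ p : ℕ, p.Prime → p ∣ d →
              ∃ I J : Finset (Fin L), (∑ i ∈ I, h i) ≠ (∑ i ∈ J, h i) ∧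
                ((padicNorm p (((∑ i ∈ I, h i) - ∑ i ∈ J, h i : ℤ) : ℚ) : ℚ) : ℝ) <
                  (p : ℝ) ^ (-(c * (d.factorization p : ℝ)))}.ncard : ℝ) ≤
          C * 2 ^ L * (d.divisors.card : ℝ) ^ (2 * L - 1) * (d : ℝ) ^ (-c) * K ^ L /
            ∏ j, (Q j : ℝ) := by
  classical
  refine ⟨1, one_pos, ?_⟩
  intro L hL c hc hcle K hK Q₀ hQ₀ Q hQ d hd hdQ₀ hKQ
  set SS : Set (Fin L → ℤ) := {h : Fin L → ℤ |
      (∀ j, 1 ≤ |h j| ∧ (|h j| : ℝ) ≤ K / (Q j : ℝ)) ∧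
      ∀ p : ℕ, p.Prime → p ∣ d →
        ∃ I J : Finset (Fin L), (∑ i ∈ I, h i) ≠ (∑ i ∈ J, h i) ∧
          ((padicNorm p (((∑ i ∈ I, h i) - ∑ i ∈ J, h i : ℤ) : ℚ) : ℚ) : ℝ) <
            (p : ℝ) ^ (-(c * (d.factorization p : ℝ)))} with hSS
  -- basic setup
  set M : Fin L → ℝ := fun i => K / (Q i : ℝ) with hM
  set m : Fin L → ℕ := fun i => ⌊M i⌋₊ with hm
  set e : ℕ → ℕ := fun p => ⌈c * (d.factorization p : ℝ)⌉₊ with he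
  set P : Finset ℕ := d.primeFactors with hP
  set B : Finset (Fin L → ℤ) := Fintype.piFinset (fun i => Finset.Icc (-(m i : ℤ)) (m i))
    with hB
  have hd1 : (1:ℝ) ≤ (d:ℝ) := by exact_mod_cast hd
  have hdQ : (d:ℝ) ≤ (Q₀:ℝ) := by exact_mod_cast Nat.le_of_dvd hQ₀ hdQ₀
  have hMbig : ∀ i, (d:ℝ) ^ (2 * c) ≤ M i := by
    intro i
    calc (d:ℝ) ^ (2 * c) ≤ (Q₀:ℝ) ^ (2 * c) :=
          Real.rpow_le_rpow (by linarith) hdQ (by positivity)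
      _ ≤ M i := hKQ i
  have hMpos : ∀ i, 0 < M i := by
    intro i
    have : (1:ℝ) ≤ (d:ℝ) ^ (2*c) := Real.one_le_rpow hd1 (by positivity)
    linarith [hMbig i]
  -- membership in box
  have habs_le : ∀ h : Fin L → ℤ, h ∈ SS → ∀ i, |h i| ≤ (m i : ℤ) := by
    intro h hh i
    have h1 : ((|h i| : ℤ) : ℝ) ≤ M i := by
      have := (hh.1 i).2
      rw [hM]
      push_cast
      exact this
    have h2 : (|h i|).toNat ≤ m i := by
      apply Nat.le_floor
      have h3 : (((|h i|).toNat : ℤ) : ℝ) ≤ M i := by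
        rw [Int.toNat_of_nonneg (abs_nonneg _)]
        exact h1
      exact_mod_cast h3
    calc |h i| = ((|h i|).toNat : ℤ) := (Int.toNat_of_nonneg (abs_nonneg _)).symm
      _ ≤ (m i : ℤ) := by exact_mod_cast h2
  have hSB : ∀ h : Fin L → ℤ, h ∈ SS → h ∈ B := by
    intro h hh
    rw [hB, Fintype.mem_piFinset]
    intro i
    rw [Finset.mem_Icc]
    exact abs_le.1 (habs_le h hh i)
  set S' : Finset (Fin L → ℤ) := B.filter (fun h => h ∈ SS) with hS'
  have hSeq : SS = ↑S' := by
    ext h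
    rw [hS']
    simp only [Finset.coe_filter, Set.mem_setOf_eq]
    exact ⟨fun hh => ⟨hSB h hh, hh⟩, fun hh => hh.2⟩
  rw [hSeq, Set.ncard_coe_finset]
  -- covering
  set Fun : Finset (∀ p ∈ P, FormT L) := P.pi (fun _ => (Finset.univ : Finset (FormT L)))
    with hFun
  set T : (∀ p ∈ P, FormT L) → Finset (Fin L → ℤ) := fun σ =>
    B.filter (fun h => (∀ j, h j ≠ 0) ∧ ∀ p, ∀ hp : p ∈ P, ((p : ℤ) ^ e p) ∣ Lform (σ p hp) h)
    with hT
  have hcover : S' ⊆ Fun.biUnion T := by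
    intro h hh
    rw [hS', Finset.mem_filter] at hh
    obtain ⟨hhB, hhS⟩ := hh
    have hchoice : ∀ p, ∀ hp : p ∈ P, ∃ f : FormT L, ((p : ℤ) ^ e p) ∣ Lform f h := by
      intro p hp
      have hp' : p.Prime := Nat.prime_of_mem_primeFactors hp
      have hpd : p ∣ d := Nat.dvd_of_mem_primeFactors hp
      obtain ⟨I, J, hne, hnorm⟩ := hhS.2 p hp' hpd
      have hDne : (∑ i ∈ I, h i) - (∑ i ∈ J, h i) ≠ 0 := sub_ne_zero.2 hne
      have hdvd : (p : ℤ) ^ e p ∣ (∑ i ∈ I, h i) - (∑ i ∈ J, h i) := by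
        rw [he]
        exact dvd_of_padicNorm_lt hp' hDne hnorm
      obtain ⟨f, hf | hf⟩ := exists_form h I J hne
      · exact ⟨f, hf ▸ hdvd⟩
      · refine ⟨f, ?_⟩
        rw [hf, ← neg_sub]
        exact dvd_neg.2 hdvd
    choose σ hσ using hchoice
    apply Finset.mem_biUnion.2
    refine ⟨σ, ?_, ?_⟩
    · rw [hFun, Finset.mem_pi]
      intros
      exact Finset.mem_univ _
    · rw [hT, Finset.mem_filter]
      refine ⟨hhB, ?_, hσ⟩
      intro j
      have := (hhS.1 j).1
      intro h0
      rw [h0] at this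
      simp at this
  -- per-σ bound
  have hperσ : ∀ σ ∈ Fun, ((T σ).card : ℝ) ≤ 2 ^ P.card * (d:ℝ) ^ (-c) * ∏ i, (2 * M i) := by
    intro σ _
    apply per_sigma_bound hc hd1 M hMbig P (fun p hp => Nat.prime_of_mem_primeFactors hp) e
      _ σ (T σ) _ _
    · rw [hP]
      apply dc_le_prod hd hc
      intro p _
      rw [he]
      exact Nat.le_ceil _
    · intro h hh i
      rw [hT, Finset.mem_filter] at hh
      refine ⟨hh.2.1 i, ?_⟩
      have hic := (Fintype.mem_piFinset.1 hh.1) i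
      rw [Finset.mem_Icc] at hic
      rw [abs_le]
      exact hic
    · intro h hh p hp
      rw [hT, Finset.mem_filter] at hh
      exact hh.2.2 p hp
  -- sum up
  have hsum : (S'.card : ℝ) ≤ (Fun.card : ℝ) * (2 ^ P.card * (d:ℝ) ^ (-c) * ∏ i, (2 * M i)) := by
    have h1 : S'.card ≤ ∑ σ ∈ Fun, (T σ).card :=
      le_trans (Finset.card_le_card hcover) (Finset.card_biUnion_le)
    have h2 : (S'.card : ℝ) ≤ ∑ σ ∈ Fun, ((T σ).card : ℝ) := by
      exact_mod_cast h1
    calc (S'.card : ℝ) ≤ ∑ σ ∈ Fun, ((T σ).card : ℝ) := h2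
      _ ≤ ∑ _σ ∈ Fun, (2 ^ P.card * (d:ℝ) ^ (-c) * ∏ i, (2 * M i)) :=
          Finset.sum_le_sum hperσ
      _ = (Fun.card : ℝ) * (2 ^ P.card * (d:ℝ) ^ (-c) * ∏ i, (2 * M i)) := by
          rw [Finset.sum_const, nsmul_eq_mul]
  have hFuncard : Fun.card = Fintype.card (FormT L) ^ P.card := by
    rw [hFun, Finset.card_pi, Finset.prod_const, Finset.card_univ]
  -- final numeric comparison
  have hkey : (Fintype.card (FormT L) : ℝ) ^ P.card * 2 ^ P.card
      ≤ (d.divisors.card : ℝ) ^ (2 * L - 1) := by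
    have hnat : Fintype.card (FormT L) ^ P.card * 2 ^ P.card
        ≤ d.divisors.card ^ (2 * L - 1) := by
      calc Fintype.card (FormT L) ^ P.card * 2 ^ P.card
          = (2 * Fintype.card (FormT L)) ^ P.card := by rw [mul_pow]; ring
        _ ≤ (2 ^ (2 * L - 1)) ^ P.card :=
            Nat.pow_le_pow_left (two_mul_formT_card_le hL) _
        _ = (2 ^ P.card) ^ (2 * L - 1) := by
            rw [← pow_mul, ← pow_mul, Nat.mul_comm]
        _ ≤ d.divisors.card ^ (2 * L - 1) :=
            Nat.pow_le_pow_left (two_pow_le_card_divisors hd) _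
    exact_mod_cast hnat
  have hprod2M : ∏ i, (2 * M i) = 2 ^ L * (K ^ L / ∏ j, (Q j : ℝ)) := by
    rw [Finset.prod_mul_distrib, Finset.prod_const, Finset.card_univ, Fintype.card_fin]
    congr 1
    rw [hM]
    rw [Finset.prod_div_distrib, Finset.prod_const, Finset.card_univ, Fintype.card_fin]
  have hdnc : (0:ℝ) < (d:ℝ) ^ (-c) := Real.rpow_pos_of_pos (by linarith) _
  have hQprod : (0:ℝ) < ∏ j, (Q j : ℝ) := by
    apply Finset.prod_pos
    intro j _
    exact_mod_cast hQ j
  calc (S'.card : ℝ)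
      ≤ (Fun.card : ℝ) * (2 ^ P.card * (d:ℝ) ^ (-c) * ∏ i, (2 * M i)) := hsum
    _ = ((Fintype.card (FormT L) : ℝ) ^ P.card * 2 ^ P.card)
        * ((d:ℝ) ^ (-c) * ∏ i, (2 * M i)) := by
        rw [hFuncard]
        push_cast
        ring
    _ ≤ (d.divisors.card : ℝ) ^ (2 * L - 1) * ((d:ℝ) ^ (-c) * ∏ i, (2 * M i)) := by
        apply mul_le_mul_of_nonneg_right hkey
        have : (0:ℝ) ≤ ∏ i, (2 * M i) :=
          Finset.prod_nonneg (fun i _ => by linarith [hMpos i])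
        positivity
    _ = 1 * 2 ^ L * (d.divisors.card : ℝ) ^ (2 * L - 1) * (d : ℝ) ^ (-c) * K ^ L /
        ∏ j, (Q j : ℝ) := by
        rw [hprod2M]
        ring
end

section
/- Let p be an odd prime, let L ≥ 1 and v ≥ 1 be integers, and let h = (h_1, …, h_L) ∈ ℤ^L. For I ⊆ {1,…,L} set H_I := ∑_{i∈I} h_i, and for τ ∈ ℤ/p^vℤ set μ(τ) := #{I ⊆ {1,…,L} : H_I ≡ τ (mod p^v)}. If μ(τ) is even for every τ ∈ ℤ/p^vℤ, then there exists some 1 ≤ i ≤ L with p | h_i. -/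
theorem stmt10 (p : ℕ) (hp : p.Prime) (hodd : p ≠ 2) (L v : ℕ) (hL : 1 ≤ L) (hv : 1 ≤ v)
    (h : Fin L → ℤ)
    (hμ : ∀ τ : ZMod (p ^ v),
      Even (((Finset.univ : Finset (Fin L)).powerset.filter
        (fun I => ((∑ i ∈ I, h i : ℤ) : ZMod (p ^ v)) = τ)).card)) :
    ∃ i : Fin L, (p : ℤ) ∣ h i := by
  by_contra hcon
  push_neg at hcon
  set n := p ^ v with hn
  have hnpos : 0 < n := pow_pos hp.pos v
  have hodd' : ¬ (2 ∣ n) := by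
    intro h2
    exact hodd ((Nat.prime_dvd_prime_iff_eq Nat.prime_two hp).mp
      (Nat.Prime.dvd_of_dvd_pow (p := 2) Nat.prime_two h2)).symm
  set K := AlgebraicClosure (ZMod 2) with hK
  have hchar : CharP K 2 := inferInstance
  have hnz : NeZero (n : K) := by
    refine ⟨fun h0 => hodd' ?_⟩
    exact (CharP.cast_eq_zero_iff K 2 n).mp h0
  obtain ⟨ζ, hζ⟩ := HasEnoughRootsOfUnity.exists_primitiveRoot K n
  have hζne : ζ ≠ 0 := hζ.ne_zero hnpos.ne'
  -- ζ^m for m : ℤ depends only on m mod n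
  haveI hnz' : NeZero n := ⟨hnpos.ne'⟩
  have key : ∀ m : ℤ, ζ ^ m = ζ ^ ((m : ZMod n).val) := by
    intro m
    have : ((Int.cast (m - ((m : ZMod n).val : ℤ))) : ZMod n) = 0 := by
      rw [Int.cast_sub, Int.cast_natCast, ZMod.natCast_val, ZMod.cast_id, sub_self]
    obtain ⟨k, hk⟩ := (ZMod.intCast_zmod_eq_zero_iff_dvd _ _).mp this
    have hm : m = ((m : ZMod n).val : ℤ) + n * k := by linarith
    rw [hm, zpow_add₀ hζne, zpow_natCast]
    have : ζ ^ ((n : ℤ) * k) = (ζ ^ (n : ℤ)) ^ k := by rw [← zpow_mul]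
    rw [this]
    rw [show (ζ : K) ^ (n : ℤ) = 1 by rw [zpow_natCast, hζ.pow_eq_one]]
    simp
  -- the product is nonzero
  have hprod : (∏ i : Fin L, (1 + ζ ^ (h i))) ≠ 0 := by
    apply Finset.prod_ne_zero_iff.mpr
    intro i _
    intro h0
    have h1 : ζ ^ (h i) = 1 := by
      have : (1 : K) + 1 = 0 := by
        have := CharP.cast_eq_zero K 2
        push_cast at this
        linear_combination this
      linear_combination h0 - this
    have := (hζ.zpow_eq_one_iff_dvd (h i)).mp h1
    exact hcon i (dvd_trans (Int.natCast_dvd_natCast.mpr (dvd_pow_self p (by omega))) this)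
  -- expand the product as a sum over subsets
  have hexp : (∏ i : Fin L, (1 + ζ ^ (h i)))
      = ∑ I ∈ (Finset.univ : Finset (Fin L)).powerset, ζ ^ (∑ i ∈ I, h i) := by
    simp_rw [add_comm (1 : K)]
    rw [Finset.prod_add]
    refine Finset.sum_congr rfl (fun I _ => ?_)
    rw [Finset.prod_const_one, mul_one]
    induction I using Finset.induction with
    | empty => simp
    | insert _ _ hx ih =>
      rw [Finset.prod_insert hx, Finset.sum_insert hx, zpow_add₀ hζne, ih (by simp)]
  -- group the sum by residue class
  have hsum : (∑ I ∈ (Finset.univ : Finset (Fin L)).powerset, ζ ^ (∑ i ∈ I, h i)) = 0 := by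
    rw [← Finset.sum_fiberwise_of_maps_to
      (g := fun I : Finset (Fin L) => ((∑ i ∈ I, h i : ℤ) : ZMod n))
      (t := (Finset.univ : Finset (ZMod n)))
      (fun I _ => Finset.mem_univ _) (fun I : Finset (Fin L) => ζ ^ (∑ i ∈ I, h i))]
    apply Finset.sum_eq_zero
    intro τ _
    have hconst : ∀ I ∈ ((Finset.univ : Finset (Fin L)).powerset.filter
        (fun I => ((∑ i ∈ I, h i : ℤ) : ZMod n) = τ)), ζ ^ (∑ i ∈ I, h i) = ζ ^ τ.val := by
      intro I hI
      rw [key]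
      rw [(Finset.mem_filter.mp hI).2]
    rw [Finset.sum_congr rfl hconst, Finset.sum_const]
    obtain ⟨k, hk⟩ := hμ τ
    rw [hk]
    have h2 : ((k + k : ℕ) : K) = 0 := by
      have := CharP.cast_eq_zero K 2
      push_cast at this ⊢
      linear_combination (k : K) * this
    rw [nsmul_eq_mul, h2, zero_mul]
  exact hprod (hexp.trans hsum)
end
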